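/- Every integral representation of a finite 2-group on ℤ³ has a G-invariant subgroup of ℤ-rank 1, i.e. a sublattice of rank 1 stable under the action. -/

import Mathlib

open Matrix

local notation "GL3" => Matrix.GeneralLinearGroup (Fin 3) ℤ

private lemma neg_one_central (g : GL3) : (-1 : GL3) * g = g * (-1) := by
  simp

private def Zc : Subgroup GL3 := Subgroup.zpowers (-1)

private instance : Zc.Normal := by
  constructor
  intro n hn g
  obtain ⟨k, rfl⟩ := hn
  have : g * (-1 : GL3) ^ k * g⁻¹ = (-1) ^ k := by
    have hc : Commute (g : GL3) ((-1 : GL3) ^ k) := by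
      apply Commute.zpow_right
      exact (neg_one_central g).symm
    rw [hc.eq, mul_assoc, mul_inv_cancel, mul_one]
  rw [this]
  exact ⟨k, rfl⟩

private lemma mem_Zc_iff (w : GL3) : w ∈ Zc ↔ w = 1 ∨ w = -1 := by
  constructor
  · rintro ⟨k, rfl⟩
    rcases Int.even_or_odd k with he | ho
    · left; exact he.neg_one_zpow
    · right
      obtain ⟨m, rfl⟩ := ho
      show (-1 : GL3) ^ (2 * m + 1) = -1
      rw [_root_.zpow_add, _root_.zpow_mul]
      have h2 : ((-1 : GL3) ^ (2:ℤ)) = 1 := by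
        rw [show (2:ℤ) = ((2:ℕ):ℤ) from rfl, zpow_natCast]
        simp
      rw [h2, _root_.one_zpow, one_mul, zpow_one]
  · rintro (rfl | rfl)
    · exact ⟨0, by simp⟩
    · exact ⟨1, by simp⟩

/-- Key lemma: there is a common eigenvector with eigenvalues ±1. -/
private lemma key (G : Type*) [Group G] [Finite G] (hG : IsPGroup 2 G)
    (ρ : G →* GL3) :
    ∃ v : Fin 3 → ℤ, v ≠ 0 ∧ ∀ g : G,
      (ρ g : Matrix (Fin 3) (Fin 3) ℤ) *ᵥ v = v ∨
      (ρ g : Matrix (Fin 3) (Fin 3) ℤ) *ᵥ v = -v := by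
  by_cases hall : ∀ g : G, ρ g = 1 ∨ ρ g = -1
  · refine ⟨Pi.single 0 1, ?_, ?_⟩
    · intro h
      have := congrFun h 0
      simp [Pi.single_eq_same] at this
    · intro g
      rcases hall g with h | h
      · left; rw [h, Units.val_one, Matrix.one_mulVec]
      · right; rw [h, Units.val_neg, Units.val_one, Matrix.neg_mulVec, Matrix.one_mulVec]
  · push_neg at hall
    obtain ⟨g₀, hg₀1, hg₀2⟩ := hall
    -- Step 1: find z ∈ GL3 with z ∉ {±1}, z² = 1, and z semicentral w.r.t. ρ.
    obtain ⟨z, hz1, hz2, hzsq, hzc⟩ :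
        ∃ z : GL3, z ≠ 1 ∧ z ≠ -1 ∧ (z ^ 2 = 1 ∨ z ^ 2 = -1) ∧
          ∀ g : G, z * ρ g = ρ g * z ∨ z * ρ g = -(ρ g * z) := by
      classical
      let φ : G →* GL3 ⧸ Zc := (QuotientGroup.mk' Zc).comp ρ
      have hH : IsPGroup 2 φ.range :=
        IsPGroup.of_surjective hG φ.rangeRestrict φ.rangeRestrict_surjective
      have hfin : Finite φ.range := Set.Finite.to_subtype (Set.finite_range ⇑φ)
      have hnt : Nontrivial φ.range := by
        refine ⟨⟨φ g₀, ⟨g₀, rfl⟩⟩, 1, ?_⟩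
        intro h
        have h1 : φ g₀ = 1 := congrArg Subtype.val h
        have : ρ g₀ ∈ Zc := (QuotientGroup.eq_one_iff (ρ g₀)).mp h1
        rcases (mem_Zc_iff _).mp this with h' | h'
        · exact hg₀1 h'
        · exact hg₀2 h'
      haveI : Fact (Nat.Prime 2) := ⟨Nat.prime_two⟩
      haveI := hnt
      haveI := hfin
      haveI := hH.center_nontrivial
      obtain ⟨c, hc⟩ := exists_ne (1 : Subgroup.center φ.range)
      have hcp : IsPGroup 2 (Subgroup.center φ.range) := hH.to_subgroup _
      obtain ⟨k, hk⟩ := (IsPGroup.iff_orderOf.mp hcp) c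
      have hkpos : k ≠ 0 := by
        rintro rfl
        simp only [pow_zero, orderOf_eq_one_iff] at hk
        exact hc hk
      set zc : Subgroup.center φ.range := c ^ (2 ^ (k - 1)) with hzc_def
      have hzc2 : zc ^ 2 = 1 := by
        rw [hzc_def, ← pow_mul]
        have : 2 ^ (k - 1) * 2 = 2 ^ k := by
          rw [← pow_succ]
          congr 1
          omega
        rw [this, ← hk, pow_orderOf_eq_one]
      have hzcne : zc ≠ 1 := by
        intro h
        have hdvd := orderOf_dvd_of_pow_eq_one h
        rw [hk] at hdvd
        have := Nat.le_of_dvd (by positivity) hdvd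
        have h2 : 2 ^ (k - 1) < 2 ^ k := by
          apply Nat.pow_lt_pow_right (by norm_num)
          omega
        omega
      obtain ⟨g₁, hg₁⟩ := (zc : φ.range).2
      refine ⟨ρ g₁, ?_, ?_, ?_, ?_⟩
      · intro h
        apply hzcne
        have : φ g₁ = 1 := by
          show (QuotientGroup.mk' Zc) (ρ g₁) = 1
          rw [h]; simp
        rw [hg₁] at this
        exact Subtype.ext (Subtype.ext this)
      · intro h
        apply hzcne
        have : φ g₁ = 1 := by
          show (QuotientGroup.mk' Zc) (ρ g₁) = 1
          rw [h]
          exact (QuotientGroup.eq_one_iff (-1 : GL3)).mpr ⟨1, by simp⟩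
        rw [hg₁] at this
        exact Subtype.ext (Subtype.ext this)
      · have h2 : ((zc : φ.range) : GL3 ⧸ Zc) ^ 2 = 1 := by
          have h3 := congrArg (fun x : Subgroup.center φ.range => ((x : φ.range) : GL3 ⧸ Zc)) hzc2
          simpa using h3
        rw [← hg₁] at h2
        have h4 : ((QuotientGroup.mk' Zc) ((ρ g₁) ^ 2)) = 1 := by
          rw [_root_.map_pow]
          exact h2
        have hmem : (ρ g₁) ^ 2 ∈ Zc := (QuotientGroup.eq_one_iff _).mp h4
        exact (mem_Zc_iff _).mp hmem
      · intro g
        have hcent := c.2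
        rw [Subgroup.mem_center_iff] at hcent
        have hzcent : ∀ h : φ.range, h * (zc : φ.range) = (zc : φ.range) * h := by
          intro h
          have hcom : Commute h (c : φ.range) := hcent h
          have h5 := hcom.pow_right (2 ^ (k - 1))
          simpa [hzc_def] using h5.eq
        have hq := hzcent ⟨φ g, ⟨g, rfl⟩⟩
        have hq'' := congrArg Subtype.val hq
        simp only [Subgroup.coe_mul] at hq''
        rw [← hg₁] at hq''
        have hmk : (QuotientGroup.mk' Zc) (ρ g₁ * ρ g) = (QuotientGroup.mk' Zc) (ρ g * ρ g₁) := by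
          simp only [_root_.map_mul]
          exact hq''.symm
        rw [QuotientGroup.mk'_eq_mk'] at hmk
        obtain ⟨w, hw, hmul⟩ := hmk
        rcases (mem_Zc_iff _).mp hw with rfl' | rfl'
        · left
          rw [rfl', mul_one] at hmul
          exact hmul
        · right
          rw [rfl', mul_neg_one] at hmul
          rw [← hmul, neg_neg]
    -- Step 2: z² = 1 via determinant.
    have hzsq1 : z ^ 2 = 1 := by
      rcases hzsq with h | h
      · exact h
      · exfalso
        have hdet : ((z : Matrix (Fin 3) (Fin 3) ℤ).det) ^ 2 = -1 := by
          have : ((z ^ 2 : GL3) : Matrix (Fin 3) (Fin 3) ℤ) = ((-1 : GL3) : Matrix (Fin 3) (Fin 3) ℤ) := by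
            rw [h]
          rw [Units.val_pow_eq_pow_val, Units.val_neg, Units.val_one] at this
          have := congrArg Matrix.det this
          rwa [Matrix.det_pow, Matrix.det_neg, Fintype.card_fin, Matrix.det_one, mul_one] at this
        have := sq_nonneg ((z : Matrix (Fin 3) (Fin 3) ℤ).det)
        rw [hdet] at this
        omega
    clear hzsq
    classical
    -- Step 3: move to ℚ.
    set ι : Matrix (Fin 3) (Fin 3) ℤ →+* Matrix (Fin 3) (Fin 3) ℚ := (Int.castRingHom ℚ).mapMatrix with hιdef
    have hιinj : Function.Injective ι := Matrix.map_injective Int.cast_injective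
    set ζ : Matrix (Fin 3) (Fin 3) ℚ := ι (z : Matrix (Fin 3) (Fin 3) ℤ) with hζdef
    have hζsq : ζ * ζ = 1 := by
      rw [hζdef, ← _root_.map_mul, ← _root_.map_one ι]
      congr 1
      have h1 := congrArg Units.val hzsq1
      rw [Units.val_pow_eq_pow_val, Units.val_one, pow_two] at h1
      exact h1
    have hζ1 : ζ ≠ 1 := by
      intro h
      apply hz1
      apply Units.ext
      apply hιinj
      rw [← hζdef, h, Units.val_one, _root_.map_one]
    have hζm1 : ζ ≠ -1 := by
      intro h
      apply hz2
      apply Units.ext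
      apply hιinj
      rw [← hζdef, h, Units.val_neg, Units.val_one, _root_.map_neg, _root_.map_one]
    -- eigenspaces
    set Wp : Submodule ℚ (Fin 3 → ℚ) := LinearMap.ker (Matrix.mulVecLin (ζ - 1)) with hWpdef
    set Wm : Submodule ℚ (Fin 3 → ℚ) := LinearMap.ker (Matrix.mulVecLin (ζ + 1)) with hWmdef
    have hWp : ∀ x, x ∈ Wp ↔ ζ *ᵥ x = x := by
      intro x
      rw [hWpdef, LinearMap.mem_ker, Matrix.mulVecLin_apply, Matrix.sub_mulVec,
        Matrix.one_mulVec, sub_eq_zero]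
    have hWm : ∀ x, x ∈ Wm ↔ ζ *ᵥ x = -x := by
      intro x
      rw [hWmdef, LinearMap.mem_ker, Matrix.mulVecLin_apply, Matrix.add_mulVec,
        Matrix.one_mulVec, ← eq_neg_iff_add_eq_zero]
    have hsup : Wp ⊔ Wm = ⊤ := by
      rw [eq_top_iff]
      rintro x -
      have hx : x = (2⁻¹ : ℚ) • (x + ζ *ᵥ x) + (2⁻¹ : ℚ) • (x - ζ *ᵥ x) := by
        rw [smul_add, smul_sub]
        have h2 : (2⁻¹ : ℚ) • x + (2⁻¹ : ℚ) • x = x := by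
          rw [← add_smul]; norm_num
        abel_nf
        rw [two_zsmul, ← two_smul ℚ, smul_smul]
        norm_num
      rw [hx]
      apply Submodule.add_mem_sup
      · apply Submodule.smul_mem
        rw [hWp, Matrix.mulVec_add, Matrix.mulVec_mulVec, hζsq, Matrix.one_mulVec, add_comm]
      · apply Submodule.smul_mem
        rw [hWm, Matrix.mulVec_sub, Matrix.mulVec_mulVec, hζsq, Matrix.one_mulVec, neg_sub]
    have hinf : Wp ⊓ Wm = ⊥ := by
      rw [eq_bot_iff]
      intro x hx
      rw [Submodule.mem_inf] at hx
      obtain ⟨h1, h2⟩ := hx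
      rw [hWp] at h1
      rw [hWm] at h2
      have h4 : x = -x := h1.symm.trans h2
      have hx0 : x = 0 := by
        funext i
        have h6 := congrFun h4 i
        simp only [Pi.neg_apply] at h6
        have : x i = 0 := by linarith
        simpa using this
      simp [hx0]
    have hdim : Module.finrank ℚ Wp + Module.finrank ℚ Wm = 3 := by
      have h := Submodule.finrank_sup_add_finrank_inf_eq Wp Wm
      rw [hsup, hinf] at h
      rw [finrank_top, finrank_bot ℚ (Fin 3 → ℚ), Module.finrank_fin_fun] at h
      omega
    -- neither eigenspace is trivial
    have hmvinj : Function.Injective (Matrix.mulVecLin (R := ℚ) (m := Fin 3) (n := Fin 3)) := by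
      intro A B h
      ext i j
      have := congrFun (congrArg (fun f => f (Pi.single j 1)) (congrArg DFunLike.coe h)) i
      simpa [Matrix.mulVecLin_apply] using this
    have hWpbot : Wp ≠ ⊥ := by
      intro h
      apply hζm1
      have htop : Wm = ⊤ := by rw [← hsup, h, bot_sup_eq]
      apply hmvinj
      apply LinearMap.ext
      intro x
      have hx : x ∈ Wm := htop ▸ Submodule.mem_top
      rw [hWm] at hx
      simp [Matrix.mulVecLin_apply, hx, Matrix.neg_mulVec, Matrix.one_mulVec]
    have hWmbot : Wm ≠ ⊥ := by
      intro h
      apply hζ1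
      have htop : Wp = ⊤ := by rw [← hsup, h, sup_bot_eq]
      apply hmvinj
      apply LinearMap.ext
      intro x
      have hx : x ∈ Wp := htop ▸ Submodule.mem_top
      rw [hWp] at hx
      simp [Matrix.mulVecLin_apply, hx, Matrix.one_mulVec]
    -- each ρ g preserves both eigenspaces
    have hpres : ∀ g : G, (∀ x ∈ Wp, ι ((ρ g : GL3) : Matrix (Fin 3) (Fin 3) ℤ) *ᵥ x ∈ Wp) ∧
        (∀ x ∈ Wm, ι ((ρ g : GL3) : Matrix (Fin 3) (Fin 3) ℤ) *ᵥ x ∈ Wm) := by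
      intro g
      set B : Matrix (Fin 3) (Fin 3) ℚ := ι ((ρ g : GL3) : Matrix (Fin 3) (Fin 3) ℤ) with hBdef
      rcases hzc g with hcg | hcg
      · have hBζ : ζ * B = B * ζ := by
          have h1 := congrArg (fun u : GL3 => ι (u : Matrix (Fin 3) (Fin 3) ℤ)) hcg
          simpa [Units.val_mul, _root_.map_mul] using h1
        constructor
        · intro x hx
          rw [hWp] at hx ⊢
          rw [Matrix.mulVec_mulVec, hBζ, ← Matrix.mulVec_mulVec, hx]
        · intro x hx
          rw [hWm] at hx ⊢
          rw [Matrix.mulVec_mulVec, hBζ, ← Matrix.mulVec_mulVec, hx, Matrix.mulVec_neg]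
      · exfalso
        have hBζ : ζ * B = -(B * ζ) := by
          have h1 := congrArg (fun u : GL3 => ι (u : Matrix (Fin 3) (Fin 3) ℤ)) hcg
          simpa [Units.val_mul, Units.val_neg, _root_.map_mul, _root_.map_neg] using h1
        set B' : Matrix (Fin 3) (Fin 3) ℚ := ι ((ρ g⁻¹ : GL3) : Matrix (Fin 3) (Fin 3) ℤ) with hB'def
        have hBB' : B' * B = 1 := by
          rw [hB'def, hBdef, ← _root_.map_mul, ← _root_.map_one ι]
          congr 1
          have : (ρ g⁻¹) * (ρ g) = 1 := by rw [← _root_.map_mul]; simp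
          have h2 := congrArg Units.val this
          rwa [Units.val_mul, Units.val_one] at h2
        have hBinj : Function.Injective (fun x : Fin 3 → ℚ => B *ᵥ x) := by
          intro x y hxy
          have := congrArg (fun u => B' *ᵥ u) hxy
          simpa [Matrix.mulVec_mulVec, hBB', Matrix.one_mulVec] using this
        have h1 : ∀ x ∈ Wp, B *ᵥ x ∈ Wm := by
          intro x hx
          rw [hWp] at hx
          rw [hWm, Matrix.mulVec_mulVec, hBζ, Matrix.neg_mulVec, ← Matrix.mulVec_mulVec, hx]
        have h2 : ∀ x ∈ Wm, B *ᵥ x ∈ Wp := by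
          intro x hx
          rw [hWm] at hx
          rw [hWp, Matrix.mulVec_mulVec, hBζ, Matrix.neg_mulVec, ← Matrix.mulVec_mulVec, hx,
            Matrix.mulVec_neg, neg_neg]
        have hle1 : Module.finrank ℚ Wp ≤ Module.finrank ℚ Wm := by
          apply LinearMap.finrank_le_finrank_of_injective
            (f := (Matrix.mulVecLin B).restrict (p := Wp) (q := Wm) h1)
          intro a b hab
          apply Subtype.ext
          apply hBinj
          exact congrArg Subtype.val hab
        have hle2 : Module.finrank ℚ Wm ≤ Module.finrank ℚ Wp := by
          apply LinearMap.finrank_le_finrank_of_injective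
            (f := (Matrix.mulVecLin B).restrict (p := Wm) (q := Wp) h2)
          intro a b hab
          apply Subtype.ext
          apply hBinj
          exact congrArg Subtype.val hab
        omega
    -- pick the 1-dimensional eigenspace
    have hd1 : Module.finrank ℚ Wp = 1 ∨ Module.finrank ℚ Wm = 1 := by
      have h1 : Module.finrank ℚ Wp ≠ 0 := fun h0 => hWpbot (Submodule.finrank_eq_zero.mp h0)
      have h2 : Module.finrank ℚ Wm ≠ 0 := fun h0 => hWmbot (Submodule.finrank_eq_zero.mp h0)
      omega
    obtain ⟨W, hW1, hWinv⟩ : ∃ W : Submodule ℚ (Fin 3 → ℚ), Module.finrank ℚ W = 1 ∧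
        ∀ g : G, ∀ x ∈ W, ι ((ρ g : GL3) : Matrix (Fin 3) (Fin 3) ℤ) *ᵥ x ∈ W := by
      rcases hd1 with h | h
      · exact ⟨Wp, h, fun g => (hpres g).1⟩
      · exact ⟨Wm, h, fun g => (hpres g).2⟩
    -- get a nonzero vector spanning W
    have hWbot : W ≠ ⊥ := by
      intro h
      rw [h, finrank_bot ℚ (Fin 3 → ℚ)] at hW1
      omega
    obtain ⟨w, hwW, hw0⟩ := Submodule.exists_mem_ne_zero_of_ne_bot hWbot
    have hspan : Submodule.span ℚ {w} = W := by
      apply Submodule.eq_of_le_of_finrank_eq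
      · rw [Submodule.span_le, Set.singleton_subset_iff]
        exact hwW
      · rw [hW1, finrank_span_singleton hw0]
    -- clear denominators
    set d : ℕ := (w 0).den * (w 1).den * (w 2).den with hddef
    have hd0 : (d : ℚ) ≠ 0 := by
      rw [hddef]
      push_cast
      positivity
    have hint : ∀ i : Fin 3, ∃ m : ℤ, (m : ℚ) = (d : ℚ) * w i := by
      intro i
      have hdvd : (w i).den ∣ d := by
        rw [hddef]
        fin_cases i
        · exact dvd_mul_of_dvd_left (dvd_mul_right _ _) _
        · exact dvd_mul_of_dvd_left (dvd_mul_left _ _) _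
        · exact dvd_mul_left _ _
      obtain ⟨e, he⟩ := hdvd
      refine ⟨(w i).num * e, ?_⟩
      have hden : ((w i).den : ℚ) ≠ 0 := by positivity
      have hkey : ((w i).den : ℚ) * w i = ((w i).num : ℚ) := by
        exact Rat.den_mul_eq_num (w i)
      rw [he]
      push_cast
      rw [← hkey]
      ring
    choose v hv using hint
    have hcastv : (fun i => (v i : ℚ)) = (d : ℚ) • w := by
      funext i
      rw [hv i]
      rfl
    have hvW : (fun i => (v i : ℚ)) ∈ W := by
      rw [hcastv]
      exact Submodule.smul_mem _ _ hwW
    have hvne : v ≠ 0 := by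
      intro h
      apply hw0
      have : (fun i => (v i : ℚ)) = 0 := by
        funext i
        rw [h]
        simp
      rw [hcastv] at this
      rcases smul_eq_zero.mp this with h' | h'
      · exact absurd h' hd0
      · exact h'
    refine ⟨v, hvne, ?_⟩
    intro g
    set B : Matrix (Fin 3) (Fin 3) ℚ := ι ((ρ g : GL3) : Matrix (Fin 3) (Fin 3) ℤ) with hBdef
    set cv : Fin 3 → ℚ := fun i => (v i : ℚ) with hcvdef
    have hcv0 : cv ≠ 0 := by
      intro h
      apply hw0
      rw [hcastv] at h
      rcases smul_eq_zero.mp h with h' | h'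
      · exact absurd h' hd0
      · exact h'
    have hBcv : B *ᵥ cv ∈ W := hWinv g cv hvW
    -- W is spanned by cv as well
    have hspan' : Submodule.span ℚ {cv} = W := by
      apply Submodule.eq_of_le_of_finrank_eq
      · rw [Submodule.span_le, Set.singleton_subset_iff]
        exact hvW
      · rw [hW1, finrank_span_singleton hcv0]
    obtain ⟨c, hc⟩ := Submodule.mem_span_singleton.mp (hspan' ▸ hBcv)
    -- c is a root of unity
    have hBn : B ^ (orderOf g) = 1 := by
      rw [hBdef, ← _root_.map_pow, ← _root_.map_one ι]
      congr 1
      have : (ρ g) ^ (orderOf g) = 1 := by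
        rw [← _root_.map_pow, pow_orderOf_eq_one, _root_.map_one]
      have h2 := congrArg Units.val this
      rwa [Units.val_pow_eq_pow_val, Units.val_one] at h2
    have hiter : ∀ m : ℕ, B ^ m *ᵥ cv = c ^ m • cv := by
      intro m
      induction m with
      | zero => simp [Matrix.one_mulVec]
      | succ m ih =>
        rw [pow_succ', ← Matrix.mulVec_mulVec, ih, Matrix.mulVec_smul, ← hc, smul_smul, ← pow_succ]
    have hord : orderOf g ≠ 0 := by
      have : 0 < orderOf g := orderOf_pos g
      omega
    have hcn : c ^ (orderOf g) = 1 := by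
      have h1 := hiter (orderOf g)
      rw [hBn, Matrix.one_mulVec] at h1
      have h2 : (c ^ (orderOf g) - 1) • cv = 0 := by
        rw [sub_smul, one_smul, ← h1, sub_self]
      rcases smul_eq_zero.mp h2 with h' | h'
      · linarith [sub_eq_zero.mp h']
      · exact absurd h' hcv0
    have hc1 : c = 1 ∨ c = -1 := by
      rcases (pow_eq_one_iff_of_ne_zero hord).mp hcn with h | h
      · left; exact h
      · right; exact h.1
    -- transfer back to ℤ
    have hcast : ∀ u : Fin 3 → ℤ, ∀ i, (((((ρ g : GL3) : Matrix (Fin 3) (Fin 3) ℤ)) *ᵥ u) i : ℚ) =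
        (B *ᵥ (fun j => (u j : ℚ))) i := by
      intro u i
      rw [hBdef]
      exact RingHom.map_mulVec (Int.castRingHom ℚ) _ _ i
    rcases hc1 with h | h
    · left
      funext i
      apply (Int.cast_injective (α := ℚ))
      show (((((ρ g : GL3) : Matrix (Fin 3) (Fin 3) ℤ)) *ᵥ v) i : ℚ) = ((v i : ℚ))
      rw [hcast v i]
      have : B *ᵥ cv = cv := by rw [← hc, h, one_smul]
      exact congrFun this i
    · right
      funext i
      apply (Int.cast_injective (α := ℚ))
      show (((((ρ g : GL3) : Matrix (Fin 3) (Fin 3) ℤ)) *ᵥ v) i : ℚ) = (((-v) i : ℚ))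
      rw [hcast v i]
      have : B *ᵥ cv = -cv := by rw [← hc, h, neg_one_smul]
      have h2 := congrFun this i
      rw [h2]
      push_cast
      rfl

theorem stmt_2 (G : Type*) [Group G] [Finite G] (hG : IsPGroup 2 G)
    (ρ : G →* Matrix.GeneralLinearGroup (Fin 3) ℤ) :
    ∃ L : Submodule ℤ (Fin 3 → ℤ), Module.rank ℤ L = 1 ∧
      ∀ g : G, L.map (Matrix.mulVecLin (ρ g : Matrix (Fin 3) (Fin 3) ℤ)) = L := by
  obtain ⟨v, hv, hev⟩ := key G hG ρ
  refine ⟨Submodule.span ℤ {v}, ?_, ?_⟩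
  · rw [rank_span_set (LinearIndepOn.singleton (v := id) hv), Cardinal.mk_singleton]
  · intro g
    rw [Submodule.map_span, Set.image_singleton, Matrix.mulVecLin_apply]
    rcases hev g with h | h
    · rw [h]
    · rw [h]
      have : (-v) = (-1 : ℤ) • v := by simp
      rw [this, Submodule.span_singleton_smul_eq isUnit_one.neg]
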